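/- For every finite rooted Kripke 2-frame F validating L = S4.1 ∗ S4 + ◇₁□₂(◇₁p → □₁p), there exists a p-morphism from the frame 𝕋_{2,2+2} onto F. -/

import Mathlib

/- ============== Formulas ============== -/

/-- Unimodal formulas. -/
inductive MForm : Type
  | var : ℕ → MForm
  | bot : MForm
  | imp : MForm → MForm → MForm
  | box : MForm → MForm

namespace MForm
def neg (A : MForm) : MForm := A.imp .bot
def dia (A : MForm) : MForm := (MForm.box A.neg).neg
def subst (σ : ℕ → MForm) : MForm → MForm
  | var n => σ n
  | bot => bot
  | imp A B => (subst σ A).imp (subst σ B)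
  | box A => MForm.box (subst σ A)
end MForm

/-- Bimodal formulas (`box 0` is □₁ and `box 1` is □₂). -/
inductive BForm : Type
  | var : ℕ → BForm
  | bot : BForm
  | imp : BForm → BForm → BForm
  | box : Fin 2 → BForm → BForm

namespace BForm
def neg (A : BForm) : BForm := A.imp .bot
def dia (i : Fin 2) (A : BForm) : BForm := (BForm.box i A.neg).neg
def subst (σ : ℕ → BForm) : BForm → BForm
  | var n => σ n
  | bot => bot
  | imp A B => (subst σ A).imp (subst σ B)
  | box i A => BForm.box i (subst σ A)
end BForm

/-- Translation of a unimodal formula into the bimodal language,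
reading □ as □ᵢ. -/
def MForm.toB (i : Fin 2) : MForm → BForm
  | .var n => .var n
  | .bot => .bot
  | .imp A B => (MForm.toB i A).imp (MForm.toB i B)
  | .box A => BForm.box i (MForm.toB i A)

/- ============== Normal modal logics ============== -/

/-- Provability in the smallest normal unimodal logic containing the axioms `Ax`:
classical tautologies (via a Hilbert axiomatization), the normality axiom,
modus ponens, necessitation and uniform substitution. -/
inductive MProv (Ax : Set MForm) : MForm → Prop
  | axm {A : MForm} : A ∈ Ax → MProv Ax A
  | pl1 {A B : MForm} : MProv Ax (A.imp (B.imp A))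
  | pl2 {A B C : MForm} : MProv Ax ((A.imp (B.imp C)).imp ((A.imp B).imp (A.imp C)))
  | pl3 {A : MForm} : MProv Ax ((A.neg.neg).imp A)
  | kax {A B : MForm} : MProv Ax ((MForm.box (A.imp B)).imp ((MForm.box A).imp (MForm.box B)))
  | mp {A B : MForm} : MProv Ax (A.imp B) → MProv Ax A → MProv Ax B
  | nec {A : MForm} : MProv Ax A → MProv Ax (MForm.box A)
  | subst {A : MForm} (σ : ℕ → MForm) : MProv Ax A → MProv Ax (A.subst σ)

/-- Provability in the smallest normal bimodal logic containing the axioms `Ax`. -/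
inductive BProv (Ax : Set BForm) : BForm → Prop
  | axm {A : BForm} : A ∈ Ax → BProv Ax A
  | pl1 {A B : BForm} : BProv Ax (A.imp (B.imp A))
  | pl2 {A B C : BForm} : BProv Ax ((A.imp (B.imp C)).imp ((A.imp B).imp (A.imp C)))
  | pl3 {A : BForm} : BProv Ax ((A.neg.neg).imp A)
  | kax (i : Fin 2) {A B : BForm} :
      BProv Ax ((BForm.box i (A.imp B)).imp ((BForm.box i A).imp (BForm.box i B)))
  | mp {A B : BForm} : BProv Ax (A.imp B) → BProv Ax A → BProv Ax B
  | nec (i : Fin 2) {A : BForm} : BProv Ax A → BProv Ax (BForm.box i A)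
  | subst {A : BForm} (σ : ℕ → BForm) : BProv Ax A → BProv Ax (A.subst σ)

/-- The propositional letter p. -/
def pM : MForm := .var 0

/-- Axioms of S4 : □p→p and □p→□□p. -/
def S4Ax : Set MForm := {(MForm.box pM).imp pM, (MForm.box pM).imp (MForm.box (MForm.box pM))}

/-- The McKinsey axiom □◇p→◇□p. -/
def McKM : MForm := (MForm.box pM.dia).imp (MForm.box pM).dia

/-- The logic S4. -/
def S4L : Set MForm := {A | MProv S4Ax A}

/-- The logic S4.1 = S4 + McKinsey. -/
def S41L : Set MForm := {A | MProv (S4Ax ∪ {McKM}) A}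

/-- Axioms of the fusion S4.1 ∗ S4 : all theorems of S4.1 read with □₁ together
with all theorems of S4 read with □₂. -/
def FusionAx : Set BForm := (MForm.toB 0 '' S41L) ∪ (MForm.toB 1 '' S4L)

/-- The fusion S4.1 ∗ S4 (as a normal bimodal logic). -/
def FusionL : Set BForm := {A | BProv FusionAx A}

def pB : BForm := .var 0

/-- The formula ◇₁□₂(◇₁p → □₁p). -/
def MKB : BForm := BForm.dia 0 (BForm.box 1 ((BForm.dia 0 pB).imp (BForm.box 0 pB)))

/-- The logic L = S4.1 ∗ S4 + ◇₁□₂(◇₁p → □₁p). -/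
def LL : Set BForm := {A | BProv (FusionAx ∪ {MKB}) A}

/- ============== Kripke semantics ============== -/

/-- Truth of a bimodal formula at a point of a Kripke 2-frame `(W, R 0, R 1)`
under valuation `V`. -/
def BSat {W : Type} (R : Fin 2 → W → W → Prop) (V : ℕ → W → Prop) : W → BForm → Prop
  | x, .var n => V n x
  | _, .bot => False
  | x, .imp A B => BSat R V x A → BSat R V x B
  | x, .box i A => ∀ y, R i x y → BSat R V y A

/-- Frame validity for bimodal formulas. -/
def BValid {W : Type} (R : Fin 2 → W → W → Prop) (A : BForm) : Prop :=
  ∀ (V : ℕ → W → Prop) (x : W), BSat R V x A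

/-- Truth of a unimodal formula at a point of a Kripke frame. -/
def MKSat {W : Type} (R : W → W → Prop) (V : ℕ → W → Prop) : W → MForm → Prop
  | x, .var n => V n x
  | _, .bot => False
  | x, .imp A B => MKSat R V x A → MKSat R V x B
  | x, .box A => ∀ y, R x y → MKSat R V y A

/-- Frame validity for unimodal formulas. -/
def MKValid {W : Type} (R : W → W → Prop) (A : MForm) : Prop :=
  ∀ (V : ℕ → W → Prop) (x : W), MKSat R V x A

/- ============== Topological semantics ============== -/

/-- Topological truth of a unimodal formula: □A holds at `x` iff some open
neighbourhood of `x` satisfies `A` everywhere. -/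
def MTSat {X : Type} (t : TopologicalSpace X) (V : ℕ → X → Prop) : X → MForm → Prop
  | x, .var n => V n x
  | _, .bot => False
  | x, .imp A B => MTSat t V x A → MTSat t V x B
  | x, .box A => ∃ U : Set X, t.IsOpen U ∧ x ∈ U ∧ ∀ y ∈ U, MTSat t V y A

/-- Topological validity for unimodal formulas. -/
def MTValid {X : Type} (t : TopologicalSpace X) (A : MForm) : Prop :=
  ∀ (V : ℕ → X → Prop) (x : X), MTSat t V x A

/-- Bitopological truth of a bimodal formula: □ᵢ is interpreted via the
topology `t i`. -/
def BTSat {X : Type} (t : Fin 2 → TopologicalSpace X) (V : ℕ → X → Prop) : X → BForm → Prop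
  | x, .var n => V n x
  | _, .bot => False
  | x, .imp A B => BTSat t V x A → BTSat t V x B
  | x, .box i A => ∃ U : Set X, (t i).IsOpen U ∧ x ∈ U ∧ ∀ y ∈ U, BTSat t V y A

/-- Bitopological validity for bimodal formulas. -/
def BTValid {X : Type} (t : Fin 2 → TopologicalSpace X) (A : BForm) : Prop :=
  ∀ (V : ℕ → X → Prop) (x : X), BTSat t V x A

/-- The horizontal topology on `X × Y`: generated by the base
`{U × {y} : U open in X, y ∈ Y}`. -/
def horiz {X Y : Type} (t : TopologicalSpace X) : TopologicalSpace (X × Y) :=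
  TopologicalSpace.generateFrom
    {S | ∃ (U : Set X) (y : Y), t.IsOpen U ∧ S = U ×ˢ ({y} : Set Y)}

/-- The vertical topology on `X × Y`: generated by the base
`{{x} × U : x ∈ X, U open in Y}`. -/
def vert {X Y : Type} (t : TopologicalSpace Y) : TopologicalSpace (X × Y) :=
  TopologicalSpace.generateFrom
    {S | ∃ (x : X) (U : Set Y), t.IsOpen U ∧ S = ({x} : Set X) ×ˢ U}

/-- The topological product `L₁ ×ₜ L₂` of two unimodal logics: the set of all
bimodal formulas valid in every bitopological product `𝔛₁ × 𝔛₂` of (nonempty)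
topological spaces with `𝔛₁ ⊨ L₁` and `𝔛₂ ⊨ L₂`. -/
def TopProdLogic (L1 L2 : Set MForm) : Set BForm :=
  {A | ∀ (X Y : Type) (t1 : TopologicalSpace X) (t2 : TopologicalSpace Y),
      Nonempty X → Nonempty Y →
      (∀ B ∈ L1, MTValid t1 B) → (∀ B ∈ L2, MTValid t2 B) →
      BTValid ![horiz t1, vert t2] A}

/-- The Alexandrov topology of a (reflexive transitive) relation `R`:
the topology with base `{R(x) : x ∈ W}`. -/
def alexandrov {W : Type} (R : W → W → Prop) : TopologicalSpace W :=
  TopologicalSpace.generateFrom {S | ∃ x, S = {t | R x t}}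

/-- A space is weakly scattered if every nonempty open set contains an
isolated point. -/
def WeaklyScattered {X : Type} (t : TopologicalSpace X) : Prop :=
  ∀ U : Set X, t.IsOpen U → U.Nonempty → ∃ x ∈ U, t.IsOpen ({x} : Set X)

/-- p-morphism between Kripke 1-frames. -/
def IsPMorphism {W U : Type} (R : W → W → Prop) (S : U → U → Prop) (f : W → U) : Prop :=
  Function.Surjective f ∧ (∀ x y, R x y → S (f x) (f y)) ∧
    (∀ x u, S (f x) u → ∃ y, R x y ∧ f y = u)

/-- p-morphism between Kripke 2-frames. -/
def IsPMorphism2 {W U : Type} (R1 R2 : W → W → Prop) (S1 S2 : U → U → Prop)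
    (f : W → U) : Prop :=
  Function.Surjective f ∧
    (∀ x y, R1 x y → S1 (f x) (f y)) ∧ (∀ x u, S1 (f x) u → ∃ y, R1 x y ∧ f y = u) ∧
    (∀ x y, R2 x y → S2 (f x) (f y)) ∧ (∀ x u, S2 (f x) u → ∃ y, R2 x y ∧ f y = u)

/- ============== The frames 𝕋₂,₂ and 𝕋₂,₂₊₂ ============== -/

/-- The four-letter alphabet {a₁,a₂,b₁,b₂}: `(false, i)` is the a-letter `aᵢ₊₁`
and `(true, i)` is the b-letter `bᵢ₊₁`. -/
abbrev Letter : Type := Bool × Fin 2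

/-- `T₂,₂ = {a₁,a₂,b₁,b₂}*`. -/
abbrev T22 : Type := List Letter

/-- `T₂ = {1,2}*`. -/
abbrev T2W : Type := List (Fin 2)

/-- First relation of `𝕋₂,₂`: append a word over the a-letters. -/
def R1T (w w' : T22) : Prop := ∃ c : T22, (∀ l ∈ c, l.1 = false) ∧ w' = w ++ c

/-- Second relation of `𝕋₂,₂`: append a word over the b-letters. -/
def R2T (w w' : T22) : Prop := ∃ d : T22, (∀ l ∈ d, l.1 = true) ∧ w' = w ++ d

/-- The carrier of `𝕋₂,₂₊₂` : `⟨a, root⟩` is encoded as `(a, none)` and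
`⟨a, b⟩` with `b ∈ T₂` as `(a, some b)`. -/
abbrev W222 : Type := T22 × Option T2W

/-- Generators of `R₁′`. -/
def R1'gen : W222 → W222 → Prop := fun x y =>
  (∃ a a', R1T a a' ∧ x = (a, none) ∧ y = (a', none)) ∨
  (∃ a, x = (a, none) ∧ y = (a, some ([] : T2W)))

/-- `R₁′`: smallest reflexive transitive relation containing the generators. -/
def R1' : W222 → W222 → Prop := Relation.ReflTransGen R1'gen

/-- Generators of `R₂′`. -/
def R2'gen : W222 → W222 → Prop := fun x y =>
  (∃ a a', R2T a a' ∧ x = (a, none) ∧ y = (a', none)) ∨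
  (∃ a b b', b <+: b' ∧ x = (a, some b) ∧ y = (a, some b'))

/-- `R₂′`: smallest reflexive transitive relation containing the generators. -/
def R2' : W222 → W222 → Prop := Relation.ReflTransGen R2'gen

/- ============== Pseudo-infinite paths and the spaces 𝒴 and 𝔛 ============== -/

/-- Infinite sequences over {0,1,2}: `none` encodes 0 and `some i` encodes
`i+1 ∈ {1,2}`. -/
abbrev Seq3 : Type := ℕ → Option (Fin 2)

/-- `W_ω`: pseudo-infinite paths, i.e. sequences with finitely many nonzero
entries. -/
def Wom : Type := {s : Seq3 // {k | s k ≠ none}.Finite}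

/-- `st(s)`: the least `N` such that all entries from `N` on are zero. -/
noncomputable def stN {γ : Type} (s : ℕ → Option γ) : ℕ :=
  sInf {N | ∀ k, N ≤ k → s k = none}

/-- The first `k` entries of a sequence, as a finite word. -/
def takeSeq {γ : Type} (s : ℕ → Option γ) (k : ℕ) : List (Option γ) :=
  List.ofFn (fun i : Fin k => s i.1)

/-- `f_F`: delete all zeros from a finite word. -/
def fF {γ : Type} (l : List (Option γ)) : List γ := l.filterMap id

/-- `f_ω`: delete the zeros from a pseudo-infinite path, producing a finite word. -/
noncomputable def squash {γ : Type} (s : ℕ → Option γ) : List γ := fF (takeSeq s (stN s))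

/-- The basic set `U_k(α) = {β ∈ W_ω : α↾k = β↾k and f_F(α↾k) ⊑ f_ω(β)}`. -/
def Uset (α : Wom) (k : ℕ) : Set Wom :=
  {β | takeSeq β.1 k = takeSeq α.1 k ∧ fF (takeSeq α.1 k) <+: squash β.1}

/-- The topology `T_ω` on `W_ω` generated by the base `{U_k(α) : k > 0}`;
`𝒴 = (W_ω, T_ω)`. -/
def Tom : TopologicalSpace Wom :=
  TopologicalSpace.generateFrom {S | ∃ α k, 0 < k ∧ S = Uset α k}

/-- The basic sets of the space `𝔛`:
`U′_k(α,0) = (U_k(α) × {0}) ∪ (U_k(α) × {n ≥ k})` and `U′_k(α,n) = {⟨α,n⟩}`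
for `n ≥ 1`. -/
def U'set (α : Wom) (k n : ℕ) : Set (Wom × ℕ) :=
  if n = 0 then (Uset α k ×ˢ ({0} : Set ℕ)) ∪ (Uset α k ×ˢ {m : ℕ | k ≤ m})
  else {(α, n)}

/-- The topology of the space `𝔛 = (W_ω × ℕ, T)`. -/
def TX : TopologicalSpace (Wom × ℕ) :=
  TopologicalSpace.generateFrom {S | ∃ α k n, S = U'set α k n}

/-- Interleaving of two paths: the sequence `a_{x₁} b_{y₁} a_{x₂} b_{y₂} …`
(with `a₀ = b₀ = 0`). -/
def interleave (α β : Seq3) : ℕ → Option Letter := fun n =>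
  if n % 2 = 0 then (α (n / 2)).map (fun v => ((false, v) : Letter))
  else (β (n / 2)).map (fun v => ((true, v) : Letter))

/-- The map `g : W_ω × W_ω → T₂,₂` obtained by interleaving and deleting zeros. -/
noncomputable def gmap (α β : Seq3) : T22 := squash (interleave α β)

/-- `g` as a map on pairs. -/
noncomputable def gPair : Wom × Wom → T22 := fun q => gmap q.1.1 q.2.1

/-- `s↾n · 0^ω`. -/
def truncSeq (s : Seq3) (n : ℕ) : Seq3 := fun k => if k < n then s k else none

/-- The tail `γ` of `s = s↾n · γ`. -/
def shiftSeq (s : Seq3) (n : ℕ) : Seq3 := fun k => s (n + k)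

/-- The map `f : 𝔛 × 𝒴 → 𝕋₂,₂₊₂` :
`f(⟨α,0⟩,β) = ⟨g(α,β), root⟩` and for `n ≥ 1`,
`f(⟨α,n⟩,β) = ⟨g(α↾n·0^ω, β↾n·0^ω), f_ω(γ)⟩` where `β = β↾n·γ`. -/
noncomputable def fXY : (Wom × ℕ) × Wom → W222 := fun q =>
  if q.1.2 = 0 then (gmap q.1.1.1 q.2.1, none)
  else (gmap (truncSeq q.1.1.1 q.1.2) (truncSeq q.2.1 q.1.2),
        some (squash (shiftSeq q.2.1 q.1.2)))

/-- An effective encoding of bimodal formulas by natural numbers. -/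
def encodeB : BForm → ℕ
  | .var n => Nat.pair 0 n
  | .bot => Nat.pair 1 0
  | .imp A B => Nat.pair 2 (Nat.pair (encodeB A) (encodeB B))
  | .box i A => Nat.pair 3 (Nat.pair i.1 (encodeB A))

open Classical in
/-- Recursion step for the coloring construction. -/
noncomputable def colorF {U : Type} (S : U → U → Prop) (ι : U → ℕ) (z : U)
    (ih : ∀ w, S z w ∧ ¬ S w z → Prop) : Prop :=
  if ∃ w, S z w ∧ S w z ∧ w ≠ z then ι z = sInf (ι '' {w | S z w ∧ S w z})
  else if h2 : ∃ w, S z w ∧ ¬ S w z then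
    ¬ ih (Classical.choose h2) (Classical.choose_spec h2)
  else True

/-- There is a "coloring" which is non-constant on the up-set of every
non-degenerate point of a finite quasi-order. -/
lemma exists_coloring {U : Type} [Finite U] (S : U → U → Prop)
    (hrefl : ∀ x, S x x) (htrans : ∀ x y z, S x y → S y z → S x z) :
    ∃ P : U → Prop, ∀ z w₀, S z w₀ → w₀ ≠ z →
      (∃ w, S z w ∧ P w) ∧ (∃ w, S z w ∧ ¬ P w) := by
  obtain ⟨ι, hι⟩ := Countable.exists_injective_nat U
  have hwf : WellFounded (fun w z : U => S z w ∧ ¬ S w z) := by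
    haveI : IsTrans U (fun w z : U => S z w ∧ ¬ S w z) :=
      ⟨fun a b c hab hbc =>
        ⟨htrans _ _ _ hbc.1 hab.1, fun h => hbc.2 (htrans _ _ _ hab.1 h)⟩⟩
    haveI : IsIrrefl U (fun w z : U => S z w ∧ ¬ S w z) := ⟨fun a h => h.2 h.1⟩
    exact Finite.wellFounded_of_trans_of_irrefl _
  let P : U → Prop := WellFounded.fix hwf (colorF S ι)
  have hPeq : ∀ z, P z = colorF S ι z (fun w _ => P w) := fun z =>
    WellFounded.fix_eq hwf (colorF S ι) z
  refine ⟨P, ?_⟩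
  intro z w₀ hw₀ hne
  by_cases hc : ∃ w, S z w ∧ S w z ∧ w ≠ z
  · obtain ⟨w₁, hw₁a, hw₁b, hw₁z⟩ := hc
    have hzC : z ∈ {w | S z w ∧ S w z} := ⟨hrefl z, hrefl z⟩
    have hCC : ∀ c, S z c ∧ S c z → {w | S c w ∧ S w c} = {w | S z w ∧ S w z} := by
      intro c hc'
      ext w
      exact ⟨fun h => ⟨htrans _ _ _ hc'.1 h.1, htrans _ _ _ h.2 hc'.2⟩,
        fun h => ⟨htrans _ _ _ hc'.2 h.1, htrans _ _ _ h.2 hc'.1⟩⟩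
    have hcnt : ∀ c, S z c ∧ S c z → ∃ w, S c w ∧ S w c ∧ w ≠ c := by
      intro c hcC
      by_cases h : c = z
      · subst h; exact ⟨w₁, hw₁a, hw₁b, hw₁z⟩
      · exact ⟨z, hcC.2, hcC.1, fun he => h he.symm⟩
    have hPc : ∀ c, S z c ∧ S c z →
        P c = (ι c = sInf (ι '' {w | S z w ∧ S w z})) := by
      intro c hcC
      rw [hPeq c]
      unfold colorF
      rw [if_pos (hcnt c hcC), hCC c hcC]
    obtain ⟨m, hmC, hm⟩ := Nat.sInf_mem (⟨ι z, z, hzC, rfl⟩ : (ι '' {w | S z w ∧ S w z}).Nonempty)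
    have hPm : P m := by rw [hPc m hmC]; exact hm
    obtain ⟨m', hm'C, hm'm⟩ : ∃ m', (S z m' ∧ S m' z) ∧ m' ≠ m := by
      by_cases h : m = z
      · exact ⟨w₁, ⟨hw₁a, hw₁b⟩, by rw [h]; exact hw₁z⟩
      · exact ⟨z, hzC, fun he => h he.symm⟩
    have hPm' : ¬ P m' := by
      rw [hPc m' hm'C]
      intro he
      exact hm'm (hι (he.trans hm.symm))
    exact ⟨⟨m, hmC.1, hPm⟩, ⟨m', hm'C.1, hPm'⟩⟩
  · have hnot : ¬ S w₀ z := fun h => hc ⟨w₀, hw₀, h, hne⟩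
    have h2 : ∃ w, S z w ∧ ¬ S w z := ⟨w₀, hw₀, hnot⟩
    have hPz : P z = ¬ P (Classical.choose h2) := by
      rw [hPeq z]
      unfold colorF
      rw [if_neg hc, dif_pos h2]
    have hch := Classical.choose_spec h2
    by_cases hp : P (Classical.choose h2)
    · exact ⟨⟨Classical.choose h2, hch.1, hp⟩, ⟨z, hrefl z, by rw [hPz]; exact fun hn => hn hp⟩⟩
    · exact ⟨⟨z, hrefl z, by rw [hPz]; exact hp⟩, ⟨Classical.choose h2, hch.1, hp⟩⟩

section AuxAutomaton

variable {U : Type}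

open Classical in
/-- One step of the "enumeration" automaton for a relation `S`. -/
noncomputable def stepA (S : U → U → Prop) (e : ℕ → U) (s : U × ℕ) (i : Fin 2) : U × ℕ :=
  if i = 0 then (s.1, s.2 + 1)
  else if S s.1 (e s.2) then (e s.2, 0) else (s.1, 0)

/-- One step of the two-relation automaton reading letters of `T₂,₂`. -/
noncomputable def stepL (S1 S2 : U → U → Prop) (e : ℕ → U) (s : U × ℕ) (l : Letter) : U × ℕ :=
  if l.1 then stepA S2 e s l.2 else stepA S1 e s l.2

lemma stepA_fst (S : U → U → Prop) (e : ℕ → U) (hrefl : ∀ x, S x x) (s : U × ℕ) (i : Fin 2) :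
    S s.1 (stepA S e s i).1 := by
  unfold stepA
  split_ifs with h1 h2
  · exact hrefl _
  · exact h2
  · exact hrefl _

lemma foldlA_fst (S : U → U → Prop) (e : ℕ → U) (hrefl : ∀ x, S x x)
    (htrans : ∀ x y z, S x y → S y z → S x z) :
    ∀ (l : List (Fin 2)) (s : U × ℕ), S s.1 (List.foldl (stepA S e) s l).1 := by
  intro l
  induction l with
  | nil => intro s; exact hrefl _
  | cons i t ih => intro s; exact htrans _ _ _ (stepA_fst S e hrefl s i) (ih _)

lemma stepA_zero (S : U → U → Prop) (e : ℕ → U) (s : U × ℕ) :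
    stepA S e s 0 = (s.1, s.2 + 1) := by
  unfold stepA; rw [if_pos rfl]

lemma stepA_one (S : U → U → Prop) (e : ℕ → U) (s : U × ℕ) (h : S s.1 (e s.2)) :
    stepA S e s 1 = (e s.2, 0) := by
  unfold stepA
  rw [if_neg (by decide : ¬ (1 : Fin 2) = 0), if_pos h]

lemma foldlA_replicate (S : U → U → Prop) (e : ℕ → U) :
    ∀ (j : ℕ) (s : U × ℕ),
      List.foldl (stepA S e) s (List.replicate j 0) = (s.1, s.2 + j) := by
  intro j
  induction j with
  | zero => intro s; simp
  | succ j ih =>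
      intro s
      rw [List.replicate_succ, List.foldl_cons, stepA_zero, ih]
      have : s.2 + 1 + j = s.2 + (j + 1) := by omega
      rw [this]

lemma foldlA_back (S : U → U → Prop) (e : ℕ → U)
    (hhit : ∀ m v, ∃ k, m ≤ k ∧ e k = v)
    (s : U × ℕ) (v : U) (hS : S s.1 v) :
    ∃ l : List (Fin 2), List.foldl (stepA S e) s l = (v, 0) := by
  obtain ⟨k, hk, hek⟩ := hhit s.2 v
  refine ⟨List.replicate (k - s.2) 0 ++ [1], ?_⟩
  rw [List.foldl_append, foldlA_replicate]
  have h2 : s.2 + (k - s.2) = k := by omega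
  rw [h2]
  show stepA S e (s.1, k) 1 = (v, 0)
  rw [stepA_one S e (s.1, k) (by show S s.1 (e k); rw [hek]; exact hS)]
  show (e k, 0) = (v, 0)
  rw [hek]

lemma foldlL_map_a (S1 S2 : U → U → Prop) (e : ℕ → U) (s : U × ℕ) (l : List (Fin 2)) :
    List.foldl (stepL S1 S2 e) s (l.map (fun i => ((false, i) : Letter))) =
      List.foldl (stepA S1 e) s l := by
  rw [List.foldl_map]; rfl

lemma foldlL_map_b (S1 S2 : U → U → Prop) (e : ℕ → U) (s : U × ℕ) (l : List (Fin 2)) :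
    List.foldl (stepL S1 S2 e) s (l.map (fun i => ((true, i) : Letter))) =
      List.foldl (stepA S2 e) s l := by
  rw [List.foldl_map]; rfl

lemma foldlL_fst_a (S1 S2 : U → U → Prop) (e : ℕ → U) (hrefl : ∀ x, S1 x x)
    (htrans : ∀ x y z, S1 x y → S1 y z → S1 x z) :
    ∀ (c : T22), (∀ l ∈ c, l.1 = false) →
      ∀ s : U × ℕ, S1 s.1 (List.foldl (stepL S1 S2 e) s c).1 := by
  intro c
  induction c with
  | nil => intro _ s; exact hrefl _
  | cons l t ih =>
      intro hall s
      obtain ⟨b, i⟩ := l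
      have hb : b = false := hall (b, i) List.mem_cons_self
      subst hb
      rw [List.foldl_cons]
      have he : stepL S1 S2 e s (false, i) = stepA S1 e s i := rfl
      rw [he]
      exact htrans _ _ _ (stepA_fst S1 e hrefl s i)
        (ih (fun x hx => hall x (List.mem_cons_of_mem _ hx)) _)

lemma foldlL_fst_b (S1 S2 : U → U → Prop) (e : ℕ → U) (hrefl : ∀ x, S2 x x)
    (htrans : ∀ x y z, S2 x y → S2 y z → S2 x z) :
    ∀ (c : T22), (∀ l ∈ c, l.1 = true) →
      ∀ s : U × ℕ, S2 s.1 (List.foldl (stepL S1 S2 e) s c).1 := by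
  intro c
  induction c with
  | nil => intro _ s; exact hrefl _
  | cons l t ih =>
      intro hall s
      obtain ⟨b, i⟩ := l
      have hb : b = true := hall (b, i) List.mem_cons_self
      subst hb
      rw [List.foldl_cons]
      have he : stepL S1 S2 e s (true, i) = stepA S2 e s i := rfl
      rw [he]
      exact htrans _ _ _ (stepA_fst S2 e hrefl s i)
        (ih (fun x hx => hall x (List.mem_cons_of_mem _ hx)) _)

end AuxAutomaton

/-- for every finite rooted Kripke 2-frame validating L there is a
p-morphism from 𝕋₂,₂₊₂ onto it. -/
theorem T222_pmorphism_onto_finite_rooted :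
    ∀ (U : Type) (S1 S2 : U → U → Prop), Nonempty U → Finite U →
      (∃ r : U, ∀ x : U, Relation.ReflTransGen (fun a b => S1 a b ∨ S2 a b) r x) →
      (∀ A ∈ LL, BValid ![S1, S2] A) →
      ∃ f : W222 → U, IsPMorphism2 R1' R2' S1 S2 f := by
  intro U S1 S2 hne hfin hroot hval
  haveI := hne
  haveI := hfin
  -- ===== membership of the axioms in L =====
  have hax1 : ((BForm.box 0 (BForm.var 0)).imp (BForm.var 0)) ∈ LL :=
    BProv.axm (Set.mem_union_left _ (Set.mem_union_left _
      ⟨_, MProv.axm (Set.mem_union_left _ (Set.mem_insert _ _)), rfl⟩))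
  have hax2 : ((BForm.box 0 (BForm.var 0)).imp (BForm.box 0 (BForm.box 0 (BForm.var 0)))) ∈ LL :=
    BProv.axm (Set.mem_union_left _ (Set.mem_union_left _
      ⟨_, MProv.axm (Set.mem_union_left _ (Set.mem_insert_of_mem _ rfl)), rfl⟩))
  have hax3 : ((BForm.box 1 (BForm.var 0)).imp (BForm.var 0)) ∈ LL :=
    BProv.axm (Set.mem_union_left _ (Set.mem_union_right _
      ⟨_, MProv.axm (Set.mem_insert _ _), rfl⟩))
  have hax4 : ((BForm.box 1 (BForm.var 0)).imp (BForm.box 1 (BForm.box 1 (BForm.var 0)))) ∈ LL :=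
    BProv.axm (Set.mem_union_left _ (Set.mem_union_right _
      ⟨_, MProv.axm (Set.mem_insert_of_mem _ rfl), rfl⟩))
  have hmkbax : MKB ∈ LL := BProv.axm (Set.mem_union_right _ rfl)
  -- ===== frame conditions =====
  have refl1 : ∀ x, S1 x x := fun x => hval _ hax1 (fun _ y => S1 x y) x (fun y hy => hy)
  have trans1 : ∀ x y z, S1 x y → S1 y z → S1 x z := by
    intro x y z hxy hyz
    exact hval _ hax2 (fun _ y => S1 x y) x (fun y hy => hy) y hxy z hyz
  have refl2 : ∀ x, S2 x x := fun x => hval _ hax3 (fun _ y => S2 x y) x (fun y hy => hy)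
  have trans2 : ∀ x y z, S2 x y → S2 y z → S2 x z := by
    intro x y z hxy hyz
    exact hval _ hax4 (fun _ y => S2 x y) x (fun y hy => hy) y hxy z hyz
  have hsem : ∀ (P : U → Prop) (x : U),
      ∃ y, S1 x y ∧ ∀ z, S2 y z →
        (((∀ w, S1 z w → (P w → False)) → False) → ∀ w, S1 z w → P w) := by
    intro P x
    have h := hval _ hmkbax (fun _ => P) x
    by_contra hcon
    push_neg at hcon
    exact h (fun y hy hQ => by
      obtain ⟨z, hz, hprem, w, hw, hnp⟩ := hcon y hy
      exact hnp (hQ z hz hprem w hw))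
  -- the key semantic consequence of MKB
  have hmkb2 : ∀ x, ∃ y, S1 x y ∧ ∀ z, S2 y z → ∀ w, S1 z w → w = z := by
    obtain ⟨P, hP⟩ := exists_coloring S1 refl1 trans1
    intro x
    obtain ⟨y, hy, hQ⟩ := hsem P x
    refine ⟨y, hy, fun z hz w hw => ?_⟩
    by_contra hwz
    obtain ⟨⟨w1, h1, hp1⟩, ⟨w2, h2, hp2⟩⟩ := hP z w hw hwz
    exact hp2 (hQ z hz (fun hall => hall w1 h1 hp1) w2 h2)
  -- ===== an enumeration of U with arbitrarily late hits =====
  have hex : ∃ e : ℕ → U, ∀ m v, ∃ k, m ≤ k ∧ e k = v := by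
    haveI := Fintype.ofFinite U
    have hn : 0 < Fintype.card U := Fintype.card_pos
    refine ⟨fun k => (Fintype.equivFin U).symm ⟨k % Fintype.card U, Nat.mod_lt _ hn⟩, ?_⟩
    intro m v
    refine ⟨(Fintype.equivFin U v).1 + (m + 1) * Fintype.card U, ?_, ?_⟩
    · have h1 : m + 1 ≤ (m + 1) * Fintype.card U := Nat.le_mul_of_pos_right _ hn
      omega
    · have hmod : ((Fintype.equivFin U v).1 + (m + 1) * Fintype.card U) % Fintype.card U
          = (Fintype.equivFin U v).1 := by
        rw [Nat.add_mul_mod_self_right]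
        exact Nat.mod_eq_of_lt (Fintype.equivFin U v).2
      have hfin2 : (⟨((Fintype.equivFin U v).1 + (m + 1) * Fintype.card U) % Fintype.card U,
          Nat.mod_lt _ hn⟩ : Fin (Fintype.card U)) = Fintype.equivFin U v := Fin.ext hmod
      show (Fintype.equivFin U).symm _ = v
      rw [hfin2, Equiv.symm_apply_apply]
  obtain ⟨e, hhit⟩ := hex
  obtain ⟨r, hr⟩ := hroot
  choose ya hya1 hya2 using hmkb2
  -- ===== the p-morphism =====
  set g : T22 → U × ℕ := fun a => List.foldl (stepL S1 S2 e) (r, 0) a with hg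
  set h : T22 → T2W → U × ℕ := fun a b => List.foldl (stepA S2 e) (ya (g a).1, 0) b with hh
  set f : W222 → U := fun x =>
    match x.2 with
    | none => (g x.1).1
    | some b => (h x.1 b).1
    with hf
  have hfnone : ∀ a, f (a, none) = (g a).1 := fun a => rfl
  have hfsome : ∀ a b, f (a, some b) = (h a b).1 := fun a b => rfl
  have hgapp : ∀ a c, g (a ++ c) = List.foldl (stepL S1 S2 e) (g a) c := fun a c => by
    rw [hg]; exact List.foldl_append
  have hhapp : ∀ a b t, h a (b ++ t) = List.foldl (stepA S2 e) (h a b) t := fun a b t => by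
    rw [hh]; exact List.foldl_append
  -- forward conditions
  have hfwd1gen : ∀ x y, R1'gen x y → S1 (f x) (f y) := by
    rintro x y (⟨a, a', hR, rfl, rfl⟩ | ⟨a, rfl, rfl⟩)
    · obtain ⟨c, hcall, rfl⟩ := hR
      rw [hfnone, hfnone, hgapp]
      exact foldlL_fst_a S1 S2 e refl1 trans1 c hcall _
    · rw [hfnone, hfsome]
      have hb : h a [] = (ya (g a).1, 0) := rfl
      rw [hb]
      exact hya1 _
  have hfwd1 : ∀ x y, R1' x y → S1 (f x) (f y) := by
    intro x y hxy
    induction hxy with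
    | refl => exact refl1 _
    | tail _ h2 ih => exact trans1 _ _ _ ih (hfwd1gen _ _ h2)
  have hfwd2gen : ∀ x y, R2'gen x y → S2 (f x) (f y) := by
    rintro x y (⟨a, a', hR, rfl, rfl⟩ | ⟨a, b, b', hpre, rfl, rfl⟩)
    · obtain ⟨c, hcall, rfl⟩ := hR
      rw [hfnone, hfnone, hgapp]
      exact foldlL_fst_b S1 S2 e refl2 trans2 c hcall _
    · obtain ⟨t, rfl⟩ := hpre
      rw [hfsome, hfsome, hhapp]
      exact foldlA_fst S2 e refl2 trans2 t _
  have hfwd2 : ∀ x y, R2' x y → S2 (f x) (f y) := by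
    intro x y hxy
    induction hxy with
    | refl => exact refl2 _
    | tail _ h2 ih => exact trans2 _ _ _ ih (hfwd2gen _ _ h2)
  -- back conditions
  have hback1 : ∀ x u, S1 (f x) u → ∃ y, R1' x y ∧ f y = u := by
    rintro ⟨a, ob⟩ u hu
    cases ob with
    | none =>
        rw [hfnone] at hu
        obtain ⟨l, hl⟩ := foldlA_back S1 e hhit (g a) u hu
        refine ⟨(a ++ l.map (fun i => ((false, i) : Letter)), none), ?_, ?_⟩
        · exact Relation.ReflTransGen.single
            (Or.inl ⟨a, _, ⟨_, by simp, rfl⟩, rfl, rfl⟩)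
        · rw [hfnone, hgapp, foldlL_map_a, hl]
    | some b =>
        have hS2 : S2 (ya (g a).1) (h a b).1 := foldlA_fst S2 e refl2 trans2 b (ya (g a).1, 0)
        rw [hfsome] at hu
        have := hya2 (g a).1 (h a b).1 hS2 u hu
        exact ⟨(a, some b), Relation.ReflTransGen.refl, by rw [hfsome, this]⟩
  have hback2 : ∀ x u, S2 (f x) u → ∃ y, R2' x y ∧ f y = u := by
    rintro ⟨a, ob⟩ u hu
    cases ob with
    | none =>
        rw [hfnone] at hu
        obtain ⟨l, hl⟩ := foldlA_back S2 e hhit (g a) u hu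
        refine ⟨(a ++ l.map (fun i => ((true, i) : Letter)), none), ?_, ?_⟩
        · exact Relation.ReflTransGen.single
            (Or.inl ⟨a, _, ⟨_, by simp, rfl⟩, rfl, rfl⟩)
        · rw [hfnone, hgapp, foldlL_map_b, hl]
    | some b =>
        rw [hfsome] at hu
        obtain ⟨l, hl⟩ := foldlA_back S2 e hhit (h a b) u hu
        refine ⟨(a, some (b ++ l)), ?_, ?_⟩
        · exact Relation.ReflTransGen.single
            (Or.inr ⟨a, b, b ++ l, ⟨l, rfl⟩, rfl, rfl⟩)
        · rw [hfsome, hhapp, hl]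
  -- surjectivity
  have hsurj : Function.Surjective f := by
    intro u
    have hru := hr u
    induction hru with
    | refl =>
        refine ⟨(([] : T22), none), ?_⟩
        rw [hfnone, hg]
        rfl
    | tail _ hstep ih =>
        obtain ⟨x, rfl⟩ := ih
        rcases hstep with hs | hs
        · obtain ⟨y, _, hy⟩ := hback1 x _ hs
          exact ⟨y, hy⟩
        · obtain ⟨y, _, hy⟩ := hback2 x _ hs
          exact ⟨y, hy⟩
  exact ⟨f, hsurj, hfwd1, hback1, hfwd2, hback2⟩
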